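/- Let (X, A, μ) be a measure space with μ(X) < ∞, let Γ be a random closed subset of X with measurable indicator, and let p_Γ(x) = P(x ∈ Γ) be its coverage function. For ρ ∈ [0,1] define the Vorob'ev quantile Q_ρ = {x ∈ X : p_Γ(x) ≥ ρ}. Then for every measurable set M ⊆ X with μ(M) = μ(Q_ρ), one has E[μ(Q_ρ Δ Γ)] ≤ E[μ(M Δ Γ)], i.e. Q_ρ minimizes the expected distance in measure to Γ among all measurable sets of the same measure. -/

import Mathlib

open MeasureTheory Set
open scoped ENNReal symmDiff

lemma expected_symmDiff_aux
    {X : Type*} [MeasurableSpace X] (μ : Measure X) [IsFiniteMeasure μ]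
    {Ω : Type*} [MeasurableSpace Ω] (P : Measure Ω) [IsProbabilityMeasure P]
    (Γ : Ω → Set X)
    (hΓ : MeasurableSet {q : Ω × X | q.2 ∈ Γ q.1})
    (p : X → ℝ≥0∞) (hp : ∀ x, p x = P {ω | x ∈ Γ ω})
    (A : Set X) (hA : MeasurableSet A) :
    ∫⁻ ω, μ (A ∆ Γ ω) ∂P
      = ∫⁻ x in A, (1 - p x) ∂μ + ∫⁻ x in Aᶜ, p x ∂μ := by
  have hsec : ∀ ω, MeasurableSet (Γ ω) := fun ω => by
    have h : Γ ω = Prod.mk ω ⁻¹' {q : Ω × X | q.2 ∈ Γ q.1} := rfl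
    rw [h]; exact measurable_prodMk_left hΓ
  set S1 : Set (Ω × X) := (Prod.snd ⁻¹' A) ∩ {q : Ω × X | q.2 ∈ Γ q.1}ᶜ with hS1def
  set S2 : Set (Ω × X) := {q : Ω × X | q.2 ∈ Γ q.1} ∩ (Prod.snd ⁻¹' A)ᶜ with hS2def
  have hS1 : MeasurableSet S1 := (hA.preimage measurable_snd).inter hΓ.compl
  have hS2 : MeasurableSet S2 := hΓ.inter (hA.preimage measurable_snd).compl
  have hsec1 : ∀ ω, Prod.mk ω ⁻¹' S1 = A \ Γ ω := fun ω => by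
    ext x; simp [hS1def, Set.diff_eq]
  have hsec2 : ∀ ω, Prod.mk ω ⁻¹' S2 = Γ ω \ A := fun ω => by
    ext x; simp [hS2def, Set.diff_eq]
  have h1 : ∫⁻ ω, μ (A \ Γ ω) ∂P = ∫⁻ x in A, (1 - p x) ∂μ := by
    have := (Measure.prod_apply (μ := P) (ν := μ) hS1).symm
    simp_rw [hsec1] at this
    rw [this, Measure.prod_apply_symm hS1]
    have : ∀ x, P ((fun ω => (ω, x)) ⁻¹' S1) = A.indicator (fun y => 1 - p y) x := by
      intro x
      by_cases hx : x ∈ A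
      · have hset : (fun ω => (ω, x)) ⁻¹' S1 = {ω | x ∈ Γ ω}ᶜ := by
          ext ω; simp [hS1def, hx]
        rw [hset, prob_compl_eq_one_sub, Set.indicator_of_mem hx, hp x]
        have : {ω | x ∈ Γ ω} = (fun ω => (ω, x)) ⁻¹' {q : Ω × X | q.2 ∈ Γ q.1} := rfl
        rw [this]; exact hΓ.preimage (measurable_prodMk_right)
      · have hset : (fun ω => (ω, x)) ⁻¹' S1 = ∅ := by
          ext ω; simp [hS1def, hx]
        rw [hset, Set.indicator_of_notMem hx]; simp
    simp_rw [this]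
    rw [lintegral_indicator hA]
  have h2 : ∫⁻ ω, μ (Γ ω \ A) ∂P = ∫⁻ x in Aᶜ, p x ∂μ := by
    have := (Measure.prod_apply (μ := P) (ν := μ) hS2).symm
    simp_rw [hsec2] at this
    rw [this, Measure.prod_apply_symm hS2]
    have : ∀ x, P ((fun ω => (ω, x)) ⁻¹' S2) = Aᶜ.indicator (fun y => p y) x := by
      intro x
      by_cases hx : x ∈ A
      · have hset : (fun ω => (ω, x)) ⁻¹' S2 = ∅ := by
          ext ω; simp [hS2def, hx]
        rw [hset, Set.indicator_of_notMem (by simpa using hx)]; simp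
      · have hset : (fun ω => (ω, x)) ⁻¹' S2 = {ω | x ∈ Γ ω} := by
          ext ω; simp [hS2def, hx]
        rw [hset, Set.indicator_of_mem (by simpa using hx), hp x]
    simp_rw [this]
    rw [lintegral_indicator hA.compl]
  have hm1 : Measurable fun ω => μ (A \ Γ ω) := by
    have := measurable_measure_prodMk_left (ν := μ) hS1
    simp_rw [hsec1] at this; exact this
  calc ∫⁻ ω, μ (A ∆ Γ ω) ∂P
      = ∫⁻ ω, (μ (A \ Γ ω) + μ (Γ ω \ A)) ∂P := by
        refine lintegral_congr fun ω => ?_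
        rw [Set.symmDiff_def,
          measure_union (disjoint_sdiff_sdiff) ((hsec ω).diff hA)]
    _ = ∫⁻ ω, μ (A \ Γ ω) ∂P + ∫⁻ ω, μ (Γ ω \ A) ∂P := lintegral_add_left hm1 _
    _ = _ := by rw [h1, h2]

/-- Vorob'ev quantiles minimize the expected distance in measure among sets of equal measure. -/
theorem vorobev_quantile_minimizes
    {X : Type*} [MeasurableSpace X] (μ : Measure X) [IsFiniteMeasure μ]
    {Ω : Type*} [MeasurableSpace Ω] (P : Measure Ω) [IsProbabilityMeasure P]
    (Γ : Ω → Set X)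
    (hΓ : MeasurableSet {p : Ω × X | p.2 ∈ Γ p.1})
    (p : X → ℝ≥0∞) (hp : ∀ x, p x = P {ω | x ∈ Γ ω})
    (ρ : ℝ≥0∞) (hρ : ρ ≤ 1)
    (Q : Set X) (hQ : Q = {x | ρ ≤ p x})
    (M : Set X) (hM : MeasurableSet M) (hμM : μ M = μ Q) :
    ∫⁻ ω, μ (Q ∆ Γ ω) ∂P ≤ ∫⁻ ω, μ (M ∆ Γ ω) ∂P := by
  have hpm : Measurable p := by
    have h : p = fun x => P ((fun ω => (ω, x)) ⁻¹' {q : Ω × X | q.2 ∈ Γ q.1}) :=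
      funext fun x => hp x
    rw [h]; exact measurable_measure_prodMk_right hΓ
  have hQm : MeasurableSet Q := by
    rw [hQ]; exact hpm measurableSet_Ici
  rw [expected_symmDiff_aux μ P Γ hΓ p hp Q hQm,
      expected_symmDiff_aux μ P Γ hΓ p hp M hM]
  -- splits
  have hdisjQ : Disjoint (Q ∩ M) (Q \ M) := by
    rw [Set.disjoint_left]; intro x hx hx2; exact hx2.2 hx.2
  have hdisjM : Disjoint (Q ∩ M) (M \ Q) := by
    rw [Set.disjoint_left]; intro x hx hx2; exact hx2.2 hx.1
  have hdisjQc : Disjoint (Qᶜ ∩ Mᶜ) (M \ Q) := by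
    rw [Set.disjoint_left]; intro x hx hx2; exact hx.2 hx2.1
  have hdisjMc : Disjoint (Qᶜ ∩ Mᶜ) (Q \ M) := by
    rw [Set.disjoint_left]; intro x hx hx2; exact hx.1 hx2.1
  have hQu : Q ∩ M ∪ Q \ M = Q := Set.inter_union_diff Q M
  have hMu : Q ∩ M ∪ M \ Q = M := by
    rw [Set.inter_comm]; exact Set.inter_union_diff M Q
  have hQcu : Qᶜ ∩ Mᶜ ∪ M \ Q = Qᶜ := by
    ext x; by_cases hx : x ∈ Q <;> by_cases hy : x ∈ M <;> simp [hx, hy]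
  have hMcu : Qᶜ ∩ Mᶜ ∪ Q \ M = Mᶜ := by
    ext x; by_cases hx : x ∈ Q <;> by_cases hy : x ∈ M <;> simp [hx, hy]
  have splitQ : ∫⁻ x in Q, (1 - p x) ∂μ
      = ∫⁻ x in Q ∩ M, (1 - p x) ∂μ + ∫⁻ x in Q \ M, (1 - p x) ∂μ := by
    rw [← lintegral_union (hQm.diff hM) hdisjQ, hQu]
  have splitM : ∫⁻ x in M, (1 - p x) ∂μ
      = ∫⁻ x in Q ∩ M, (1 - p x) ∂μ + ∫⁻ x in M \ Q, (1 - p x) ∂μ := by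
    rw [← lintegral_union (hM.diff hQm) hdisjM, hMu]
  have splitQc : ∫⁻ x in Qᶜ, p x ∂μ
      = ∫⁻ x in Qᶜ ∩ Mᶜ, p x ∂μ + ∫⁻ x in M \ Q, p x ∂μ := by
    rw [← lintegral_union (hM.diff hQm) hdisjQc, hQcu]
  have splitMc : ∫⁻ x in Mᶜ, p x ∂μ
      = ∫⁻ x in Qᶜ ∩ Mᶜ, p x ∂μ + ∫⁻ x in Q \ M, p x ∂μ := by
    rw [← lintegral_union (hQm.diff hM) hdisjMc, hMcu]
  rw [splitQ, splitM, splitQc, splitMc]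
  -- equal measures of the two differences
  have hmeq : μ (Q \ M) = μ (M \ Q) := by
    have h1 : μ (Q ∩ M) + μ (Q \ M) = μ Q := measure_inter_add_diff Q hM
    have h2 : μ (Q ∩ M) + μ (M \ Q) = μ M := by
      rw [Set.inter_comm]; exact measure_inter_add_diff M hQm
    rw [hμM, ← h1] at h2
    exact (ENNReal.add_right_inj (measure_ne_top μ _)).mp h2.symm
  -- key inequality on the differences
  have hQdiff : ∀ x ∈ Q \ M, ρ ≤ p x := fun x hx => by
    have := hx.1; rw [hQ] at this; exact this
  have hMdiff : ∀ x ∈ M \ Q, p x ≤ ρ := fun x hx => by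
    have := hx.2; rw [hQ] at this; exact le_of_not_ge this
  have hab : ∫⁻ x in Q \ M, (1 - p x) ∂μ + ∫⁻ x in M \ Q, p x ∂μ
      ≤ ∫⁻ x in M \ Q, (1 - p x) ∂μ + ∫⁻ x in Q \ M, p x ∂μ := by
    calc ∫⁻ x in Q \ M, (1 - p x) ∂μ + ∫⁻ x in M \ Q, p x ∂μ
        ≤ (1 - ρ) * μ (Q \ M) + ρ * μ (M \ Q) := by
          refine add_le_add ?_ ?_
          · calc ∫⁻ x in Q \ M, (1 - p x) ∂μ
                ≤ ∫⁻ _x in Q \ M, (1 - ρ) ∂μ :=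
                  setLIntegral_mono measurable_const
                    (fun x hx => tsub_le_tsub_left (hQdiff x hx) 1)
              _ = (1 - ρ) * μ (Q \ M) := setLIntegral_const _ _
          · calc ∫⁻ x in M \ Q, p x ∂μ
                ≤ ∫⁻ _x in M \ Q, ρ ∂μ :=
                  setLIntegral_mono measurable_const (fun x hx => hMdiff x hx)
              _ = ρ * μ (M \ Q) := setLIntegral_const _ _
      _ = (1 - ρ) * μ (M \ Q) + ρ * μ (Q \ M) := by rw [hmeq]
      _ ≤ ∫⁻ x in M \ Q, (1 - p x) ∂μ + ∫⁻ x in Q \ M, p x ∂μ := by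
          refine add_le_add ?_ ?_
          · calc (1 - ρ) * μ (M \ Q) = ∫⁻ _x in M \ Q, (1 - ρ) ∂μ :=
                  (setLIntegral_const _ _).symm
              _ ≤ ∫⁻ x in M \ Q, (1 - p x) ∂μ :=
                  setLIntegral_mono (measurable_const.sub hpm)
                    (fun x hx => tsub_le_tsub_left (hMdiff x hx) 1)
          · calc ρ * μ (Q \ M) = ∫⁻ _x in Q \ M, ρ ∂μ := (setLIntegral_const _ _).symm
              _ ≤ ∫⁻ x in Q \ M, p x ∂μ := setLIntegral_mono hpm (fun x hx => hQdiff x hx)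
  -- assemble
  set a := ∫⁻ x in Q ∩ M, (1 - p x) ∂μ
  set b := ∫⁻ x in Qᶜ ∩ Mᶜ, p x ∂μ
  set c := ∫⁻ x in Q \ M, (1 - p x) ∂μ
  set d := ∫⁻ x in M \ Q, p x ∂μ
  set e := ∫⁻ x in M \ Q, (1 - p x) ∂μ
  set f := ∫⁻ x in Q \ M, p x ∂μ
  calc a + c + (b + d) = (a + b) + (c + d) := by ring
    _ ≤ (a + b) + (e + f) := add_le_add_right hab _
    _ = a + e + (b + f) := by ring
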